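/- Let m ≥ 1, let N be the 2-adic valuation of m, and let 0 ≤ s ≤ N. Then the 2-adic valuation of S(m, 2(2^s − 1)) is exactly N − s; i.e., 2^{N−s} divides S(m, 2(2^s − 1)) but 2^{N−s+1} does not. (The key 2-primary valuation computation in the proof of Theorem 4.4.) -/

import Mathlib

/-- `S(m,i) = Σ_{k=1}^{m} C(2k-1, i)`. -/
def Smi (m i : ℕ) : ℕ := ∑ k ∈ Finset.Icc 1 m, (2*k-1).choose i

def Gf (m i : ℕ) : ℕ := ∑ j ∈ Finset.range (i+1), m.choose j * (j.choose (i-j) * 4^j)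

def Hf (m i : ℕ) : ℕ := ∑ j ∈ Finset.range (i+1), m.choose (j+1) * (j.choose (i-j) * 4^j)

lemma Gstep (m i : ℕ) :
    Gf (m+1) i = Gf m i + ∑ j ∈ Finset.range i, m.choose j * ((j+1).choose (i-1-j) * 4^(j+1)) := by
  rw [Gf, Finset.sum_range_succ' _ i, Gf, Finset.sum_range_succ' _ i]
  have h1 : ∀ x, (m+1).choose (x+1) * ((x+1).choose (i-(x+1)) * 4^(x+1))
      = m.choose (x+1) * ((x+1).choose (i-(x+1)) * 4^(x+1))
        + m.choose x * ((x+1).choose (i-1-x) * 4^(x+1)) := by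
    intro x
    rw [show i - 1 - x = i - (x+1) by omega, Nat.choose_succ_succ, Nat.add_mul]
    ring
  rw [Finset.sum_congr rfl (fun x _ => h1 x), Finset.sum_add_distrib]
  simp [Nat.add_assoc, Nat.add_comm, Nat.add_left_comm]

lemma Acorr (m i' : ℕ) :
    ∑ j ∈ Finset.range (i'+2), m.choose j * ((j+1).choose (i'+1-j) * 4^(j+1))
      = 4 * Gf m i' + 4 * Gf m (i'+1) := by
  rw [Finset.sum_range_succ]
  have h1 : ∀ x ∈ Finset.range (i'+1), m.choose x * ((x+1).choose (i'+1-x) * 4^(x+1))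
      = 4 * (m.choose x * (x.choose (i'-x) * 4^x))
        + 4 * (m.choose x * (x.choose (i'+1-x) * 4^x)) := by
    intro x hx
    rw [Finset.mem_range] at hx
    rw [show i'+1-x = (i'-x)+1 by omega]
    simp only [Nat.choose_succ_succ, Nat.succ_eq_add_one]
    ring
  have h2 : Gf m (i'+1) = (∑ x ∈ Finset.range (i'+1), m.choose x * (x.choose (i'+1-x) * 4^x))
      + m.choose (i'+1) * ((i'+1).choose 0 * 4^(i'+1)) := by
    rw [Gf, Finset.sum_range_succ, Nat.sub_self]
  rw [Finset.sum_congr rfl h1, Finset.sum_add_distrib, ← Finset.mul_sum, ← Finset.mul_sum, h2, ← Gf]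
  simp only [Nat.sub_self, Nat.choose_zero_right]
  ring

lemma LA (m : ℕ) : ∀ i, 2^i * (2*m).choose i = Gf m i := by
  induction m with
  | zero =>
    intro i
    rcases Nat.eq_zero_or_pos i with rfl | hi
    · simp [Gf]
    · rw [Gf, Finset.sum_eq_zero]
      · simp [Nat.choose_eq_zero_of_lt hi]
      · intro j hj
        rcases Nat.eq_zero_or_pos j with rfl | hj0
        · simp [Nat.choose_eq_zero_of_lt hi]
        · simp [Nat.choose_eq_zero_of_lt hj0]
  | succ m ih =>
    intro i
    match i with
    | 0 => simp [Gf]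
    | 1 =>
      rw [Gf]
      simp [Finset.sum_range_succ, Nat.mul_succ, Nat.choose_one_right]
      ring
    | (i'+2) =>
      rw [Gstep]
      rw [Finset.sum_congr rfl (fun j _ => by rw [show i'+2-1-j = i'+1-j from by omega])]
      rw [Acorr]
      have key : (2*(m+1)).choose (i'+2)
          = (2*m).choose (i'+2) + 2 * (2*m).choose (i'+1) + (2*m).choose i' := by
        have h : 2*(m+1) = (2*m+1)+1 := by ring
        rw [h, Nat.choose_succ_succ, Nat.choose_succ_succ (2*m) (i'+1)]
        simp only [Nat.choose_succ_succ, Nat.succ_eq_add_one, show i'+1+1 = i'+2 from rfl]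
        omega
      rw [key, ← ih (i'+2), ← ih (i'+1), ← ih i']
      ring

lemma Hstep (m i : ℕ) : Hf (m+1) i = Hf m i + Gf m i := by
  rw [Hf, Hf, Gf]
  simp only [Nat.choose_succ_succ, Nat.succ_eq_add_one, Nat.add_mul, Finset.sum_add_distrib]
  omega

lemma LB (m : ℕ) : ∀ i, 2^(i+1) * Smi m (i+1) = Hf m (i+1) + 2 * Hf m i := by
  induction m with
  | zero => intro i; simp [Smi, Hf]
  | succ m ih =>
    intro i
    have hsmi : Smi (m+1) (i+1) = Smi m (i+1) + (2*m+1).choose (i+1) := by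
      rw [Smi, Smi, Finset.sum_Icc_succ_top (by omega : 1 ≤ m+1),
        show 2*(m+1)-1 = 2*m+1 from by omega]
    have hch : 2^(i+1) * (2*m+1).choose (i+1) = Gf m (i+1) + 2 * Gf m i := by
      rw [Nat.choose_succ_succ, Nat.mul_add, pow_succ, mul_comm (2^i) 2, mul_assoc, LA]
      simp only [Nat.succ_eq_add_one]
      rw [show (2:ℕ) * 2^i * (2*m).choose (i+1) = 2^(i+1) * (2*m).choose (i+1) from by ring, LA]
      omega
    rw [hsmi, Nat.mul_add, ih, hch, Hstep, Hstep]
    ring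

lemma LC (m k : ℕ) : 2 ^ (m.factorization 2 - (k+1).factorization 2) ∣ m.choose (k+1) := by
  rcases Nat.eq_zero_or_pos m with rfl | hm
  · simp
  rcases le_or_gt (k+1) m with hkm | hkm
  · have key : m * (m-1).choose k = m.choose (k+1) * (k+1) := by
      have := Nat.add_one_mul_choose_eq (m-1) k
      rw [Nat.sub_add_cancel hm] at this
      exact this
    have hc1 : (m-1).choose k ≠ 0 := (Nat.choose_pos (by omega : k ≤ m-1)).ne'
    have hc2 : m.choose (k+1) ≠ 0 := (Nat.choose_pos hkm).ne'
    have hfac : m.factorization 2 + ((m-1).choose k).factorization 2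
        = (m.choose (k+1)).factorization 2 + (k+1).factorization 2 := by
      have h1 := Nat.factorization_mul (by omega : m ≠ 0) hc1
      have h2 := Nat.factorization_mul hc2 (by omega : k+1 ≠ 0)
      have h3 : (m * (m-1).choose k).factorization 2
          = ((m.choose (k+1)) * (k+1)).factorization 2 := by rw [key]
      rw [h1, h2] at h3
      simpa using h3
    have : m.factorization 2 - (k+1).factorization 2 ≤ (m.choose (k+1)).factorization 2 := by
      omega
    exact (Nat.Prime.pow_dvd_iff_le_factorization Nat.prime_two hc2).mpr this
  · simp [Nat.choose_eq_zero_of_lt hkm]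

lemma LEfac (s d : ℕ) : (2^s + d).factorization 2 ≤ s + d := by
  set v := (2^s + d).factorization 2 with hv
  have hpos : 0 < 2^s + d := by positivity
  have hdvd : 2^v ∣ 2^s + d := Nat.ordProj_dvd _ 2
  have hle : 2^v ≤ 2^s + d := Nat.le_of_dvd hpos hdvd
  have h2 : 2^s + d < 2^(s+d+1) := by
    have h3 : d < 2^d := Nat.lt_two_pow_self
    have h4 : (2:ℕ)^d ≤ 2^(s+d) := Nat.pow_le_pow_right (by norm_num) (by omega)
    have h5 : (2:ℕ)^s ≤ 2^(s+d) := Nat.pow_le_pow_right (by norm_num) (by omega)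
    have h6 : (2:ℕ)^(s+d+1) = 2^(s+d) + 2^(s+d) := by rw [pow_succ]; ring
    omega
  have h7 : (2:ℕ)^v < 2^(s+d+1) := lt_of_le_of_lt hle h2
  by_contra hcon
  have : (2:ℕ)^(s+d+1) ≤ 2^v := Nat.pow_le_pow_right (by norm_num) (by omega)
  omega

lemma LD (s : ℕ) : ∀ a, 1 ≤ a → ¬ 2 ∣ (2^s * a - 1).choose (2^s - 1) := by
  haveI : Fact (Nat.Prime 2) := ⟨Nat.prime_two⟩
  induction s with
  | zero => intro a ha; simp
  | succ s ih =>
    intro a ha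
    have hmod := Choose.choose_modEq_choose_mod_mul_choose_div_nat
      (p := 2) (n := 2^(s+1) * a - 1) (k := 2^(s+1) - 1)
    have hps : 1 ≤ (2:ℕ)^s := Nat.one_le_two_pow
    have hsa : 1 ≤ 2^s * a := Nat.one_le_iff_ne_zero.mpr (by positivity)
    have hn : 2^(s+1) * a - 1 = 2 * (2^s * a - 1) + 1 := by
      rw [pow_succ]
      have : 2^s * 2 * a = 2 * (2^s * a) := by ring
      omega
    have hk : 2^(s+1) - 1 = 2 * (2^s - 1) + 1 := by rw [pow_succ]; omega
    rw [hn, hk] at hmod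
    have hmod2 : (2 * (2^s * a - 1) + 1) % 2 = 1 := by omega
    have hkm2 : (2 * (2^s - 1) + 1) % 2 = 1 := by omega
    have hdiv : (2 * (2^s * a - 1) + 1) / 2 = 2^s * a - 1 := by omega
    have hdiv2 : (2 * (2^s - 1) + 1) / 2 = 2^s - 1 := by omega
    rw [hmod2, hkm2, hdiv, hdiv2, Nat.choose_self, one_mul] at hmod
    intro hcon
    rw [hn, hk] at hcon
    have hodd := ih a ha
    unfold Nat.ModEq at hmod
    omega

lemma Hsplit (m q i : ℕ) (hq : q < i+1) (hzero : ∀ j < q, j.choose (i-j) = 0) :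
    Hf m i = m.choose (q+1) * (q.choose (i-q) * 4^q)
      + ∑ j ∈ Finset.Ico (q+1) (i+1), m.choose (j+1) * (j.choose (i-j) * 4^j) := by
  rw [Hf, Finset.range_eq_Ico, ← Finset.sum_Ico_consecutive _ (Nat.zero_le q) (le_of_lt hq),
    Finset.sum_eq_sum_Ico_succ_bot hq]
  have h0 : ∑ j ∈ Finset.Ico 0 q, m.choose (j+1) * (j.choose (i-j) * 4^j) = 0 := by
    apply Finset.sum_eq_zero
    intro j hj
    rw [Finset.mem_Ico] at hj
    rw [hzero j hj.2]
    ring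
  rw [h0]
  ring

/-- The 2-primary valuation computation in the proof of Theorem 4.4: with `N` the
2-adic valuation of `m` and `0 ≤ s ≤ N`, the 2-adic valuation of `S(m, 2(2^s - 1))`
is exactly `N - s`. -/
theorem stmt9 (m s : ℕ) (hm : 1 ≤ m) (hs : s ≤ m.factorization 2) :
    2 ^ (m.factorization 2 - s) ∣ Smi m (2 * (2^s - 1)) ∧
    ¬ 2 ^ (m.factorization 2 - s + 1) ∣ Smi m (2 * (2^s - 1)) := by
  set N := m.factorization 2 with hN
  rcases Nat.eq_zero_or_pos s with rfl | hs1
  · -- s = 0 : Smi m 0 = m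
    have h0 : 2 * (2^0 - 1) = 0 := by norm_num
    have hsmi : Smi m (2 * (2^0 - 1)) = m := by
      rw [h0, Smi]
      simp
    rw [hsmi]
    refine ⟨by simpa using Nat.ordProj_dvd m 2, ?_⟩
    simpa using Nat.pow_succ_factorization_not_dvd (by omega : m ≠ 0) Nat.prime_two
  · -- s ≥ 1
    have hP : 2 ≤ (2:ℕ)^s := by
      calc (2:ℕ) = 2^1 := (pow_one 2).symm
      _ ≤ 2^s := Nat.pow_le_pow_right (by norm_num) hs1
    set i := 2 * (2^s - 1) with hidef
    have hi2 : 2 ≤ i := by omega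
    -- the master identity
    have hLB : 2^i * Smi m i = Hf m i + 2 * Hf m (i-1) := by
      have := LB m (i-1)
      rw [show i-1+1 = i by omega] at this
      exact this
    -- split Hf m i
    have hz1 : ∀ j < 2^s - 1, j.choose (i-j) = 0 := by
      intro j hj
      exact Nat.choose_eq_zero_of_lt (by omega)
    have hsp1 := Hsplit m (2^s - 1) i (by omega) hz1
    rw [show 2^s - 1 + 1 = 2^s by omega] at hsp1
    have main1 : (2^s - 1).choose (i - (2^s - 1)) * 4^(2^s - 1) = 2^i := by
      rw [show i - (2^s - 1) = 2^s - 1 by omega, Nat.choose_self, one_mul,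
        show (4:ℕ) = 2^2 by norm_num, ← pow_mul]
    rw [main1] at hsp1
    -- split Hf m (i-1)
    have hz2 : ∀ j < 2^s - 1, j.choose (i-1-j) = 0 := by
      intro j hj
      exact Nat.choose_eq_zero_of_lt (by omega)
    have hsp2 := Hsplit m (2^s - 1) (i-1) (by omega) hz2
    rw [show 2^s - 1 + 1 = 2^s by omega] at hsp2
    have main2 : (2^s - 1).choose (i - 1 - (2^s - 1)) * 4^(2^s - 1) = (2^s - 1) * 2^i := by
      rw [show i - 1 - (2^s - 1) = 2^s - 2 by omega]
      have hch : (2^s - 1).choose (2^s - 2) = 2^s - 1 := by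
        have h := Nat.choose_succ_self_right (2^s - 2)
        rw [show 2^s - 2 + 1 = 2^s - 1 by omega] at h
        exact h
      rw [hch, show (4:ℕ) = 2^2 by norm_num, ← pow_mul]
    rw [main2] at hsp2
    -- error term divisibility
    have herr1 : 2^(i + (N-s) + 1) ∣
        ∑ j ∈ Finset.Ico (2^s) (i+1), m.choose (j+1) * (j.choose (i-j) * 4^j) := by
      apply Finset.dvd_sum
      intro j hj
      rw [Finset.mem_Ico] at hj
      have hd : j + 1 = 2^s + (j + 1 - 2^s) ∧ 1 ≤ j + 1 - 2^s := by omega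
      set d := j + 1 - 2^s with hdd
      have hw : (j+1).factorization 2 ≤ s + d := by rw [hd.1]; exact LEfac s d
      have hc : 2^(N - (j+1).factorization 2) ∣ m.choose (j+1) := LC m j
      have h4 : (4:ℕ)^j = 2^(2*j) := by rw [show (4:ℕ) = 2^2 by norm_num, ← pow_mul]
      have hexp : i + (N-s) + 1 ≤ (N - (j+1).factorization 2) + 2*j := by omega
      calc 2^(i + (N-s) + 1) ∣ 2^((N - (j+1).factorization 2) + 2*j) := pow_dvd_pow 2 hexp
        _ = 2^(N - (j+1).factorization 2) * 2^(2*j) := pow_add 2 _ _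
        _ ∣ m.choose (j+1) * 4^j := by rw [h4]; exact mul_dvd_mul hc dvd_rfl
        _ ∣ m.choose (j+1) * (j.choose (i-j) * 4^j) :=
            ⟨j.choose (i-j), by ring⟩
    have herr2 : 2^(i + (N-s)) ∣
        ∑ j ∈ Finset.Ico (2^s) (i-1+1), m.choose (j+1) * (j.choose (i-1-j) * 4^j) := by
      apply Finset.dvd_sum
      intro j hj
      rw [Finset.mem_Ico] at hj
      have hd : j + 1 = 2^s + (j + 1 - 2^s) ∧ 1 ≤ j + 1 - 2^s := by omega
      set d := j + 1 - 2^s with hdd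
      have hw : (j+1).factorization 2 ≤ s + d := by rw [hd.1]; exact LEfac s d
      have hc : 2^(N - (j+1).factorization 2) ∣ m.choose (j+1) := LC m j
      have h4 : (4:ℕ)^j = 2^(2*j) := by rw [show (4:ℕ) = 2^2 by norm_num, ← pow_mul]
      have hexp : i + (N-s) ≤ (N - (j+1).factorization 2) + 2*j := by omega
      calc 2^(i + (N-s)) ∣ 2^((N - (j+1).factorization 2) + 2*j) := pow_dvd_pow 2 hexp
        _ = 2^(N - (j+1).factorization 2) * 2^(2*j) := pow_add 2 _ _
        _ ∣ m.choose (j+1) * 4^j := by rw [h4]; exact mul_dvd_mul hc dvd_rfl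
        _ ∣ m.choose (j+1) * (j.choose (i-1-j) * 4^j) :=
            ⟨j.choose (i-1-j), by ring⟩
    obtain ⟨e1, he1⟩ := herr1
    obtain ⟨e2, he2⟩ := herr2
    -- introduce Q with 2^s = Q + 1 to avoid ℕ-subtraction in ring
    obtain ⟨Q, hQ⟩ : ∃ Q, 2^s = Q + 1 := ⟨2^s - 1, by omega⟩
    -- combine
    have hbig : 2^i * Smi m i
        = 2^i * ((2*Q+1) * m.choose (2^s) + 2^((N-s)+1) * (e1 + e2)) := by
      rw [hLB, hsp1, hsp2, he1, he2,
        show (2:ℕ)^(i + (N-s) + 1) = 2^i * 2^((N-s)+1) by rw [← pow_add, Nat.add_assoc],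
        show (2:ℕ)^(i + (N-s)) = 2^i * 2^(N-s) by rw [← pow_add],
        show 2^s - 1 = Q by omega,
        show (2:ℕ)^((N-s)+1) = 2^(N-s) * 2 by rw [pow_succ]]
      ring
    have hsmi2 : Smi m i = (2*Q+1) * m.choose (2^s) + 2^((N-s)+1) * (e1 + e2) :=
      Nat.eq_of_mul_eq_mul_left (pow_pos two_pos i) hbig
    -- main term valuation
    set u := m / 2^N with hu
    have hmu : 2^N * u = m := Nat.ordProj_mul_ordCompl_eq_self m 2
    have hX : m.choose (2^s) = 2^(N-s) * (u * (m-1).choose (2^s - 1)) := by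
      have hkey : m * (m-1).choose (2^s - 1) = m.choose (2^s) * 2^s := by
        have h := Nat.add_one_mul_choose_eq (m-1) (2^s - 1)
        rw [Nat.sub_add_cancel hm, show 2^s - 1 + 1 = 2^s by omega] at h
        exact h
      have hNs : (2:ℕ)^N = 2^s * 2^(N-s) := by rw [← pow_add]; congr 1; omega
      apply Nat.eq_of_mul_eq_mul_left (show 0 < (2:ℕ)^s by positivity)
      calc 2^s * m.choose (2^s) = m.choose (2^s) * 2^s := by ring
        _ = m * (m-1).choose (2^s - 1) := hkey.symm
        _ = (2^s * 2^(N-s)) * u * (m-1).choose (2^s - 1) := by rw [← hNs, hmu]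
        _ = 2^s * (2^(N-s) * (u * (m-1).choose (2^s - 1))) := by ring
    have hu_odd : ¬ 2 ∣ u := Nat.not_dvd_ordCompl Nat.prime_two (by omega)
    have hc_odd : ¬ 2 ∣ (m-1).choose (2^s - 1) := by
      have hdvd : 2^s ∣ m := dvd_trans (pow_dvd_pow 2 hs) (Nat.ordProj_dvd m 2)
      have ha : 1 ≤ m / 2^s := Nat.one_le_div_iff (by positivity) |>.mpr (by
        exact Nat.le_of_dvd (by omega) hdvd)
      have hma : 2^s * (m / 2^s) = m := Nat.mul_div_cancel' hdvd
      have := LD s (m / 2^s) ha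
      rwa [hma] at this
    -- final
    set c := (m-1).choose (2^s - 1) with hc
    have hfinal : Smi m i = 2^(N-s) * ((2*Q+1) * (u * c) + 2 * (e1 + e2)) := by
      rw [hsmi2, hX, show (2:ℕ)^((N-s)+1) = 2^(N-s) * 2 by rw [pow_succ]]
      ring
    constructor
    · exact ⟨(2*Q+1) * (u * c) + 2 * (e1 + e2), hfinal⟩
    · intro hcon
      rw [hfinal, pow_succ] at hcon
      have h2K : 2 ∣ (2*Q+1) * (u * c) + 2 * (e1 + e2) :=
        (Nat.mul_dvd_mul_iff_left (show 0 < (2:ℕ)^(N-s) by positivity)).mp hcon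
      have h2M : 2 ∣ (2*Q+1) * (u * c) := by omega
      rcases (Nat.prime_two.dvd_mul).mp h2M with h | h
      · omega
      · rcases (Nat.prime_two.dvd_mul).mp h with h' | h'
        · exact hu_odd h'
        · exact hc_odd h'
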